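/- Let m ∈ ℂ with m ≠ 0. Then the supremum sup { |z₁ − z₂| : z₁, z₂ ∈ ℂ, ‖[D, π(z₁,z₂)]‖ ≤ 1 } equals 1/|m|. That is, the Connes distance between the two points (characters) x(z₁,z₂) = z₁ and y(z₁,z₂) = z₂ of the two-point spectral geometry equals 1/|m|. -/

import Mathlib

open Matrix
open scoped Matrix.Norms.L2Operator

/-- The Dirac operator of the two-point finite spectral triple. -/
noncomputable def Dir (m : ℂ) : Matrix (Fin 3) (Fin 3) ℂ :=
  !![0, m, starRingEnd ℂ m; starRingEnd ℂ m, 0, 0; m, 0, 0]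

/-- The representation of the algebra `ℂ ⊕ ℂ` on `ℂ³`. -/
noncomputable def π' (z₁ z₂ : ℂ) : Matrix (Fin 3) (Fin 3) ℂ :=
  Matrix.diagonal ![z₁, z₁, z₂]

lemma π'_eq (z₁ z₂ : ℂ) : π' z₁ z₂ = !![z₁, 0, 0; 0, z₁, 0; 0, 0, z₂] := by
  ext i j
  fin_cases i <;> fin_cases j <;>
    simp [π', Matrix.diagonal, Matrix.vecHead, Matrix.vecTail]

lemma comm_eq (m z₁ z₂ : ℂ) :
    Dir m * π' z₁ z₂ - π' z₁ z₂ * Dir m =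
      !![0, 0, starRingEnd ℂ m * (z₂ - z₁); 0, 0, 0; m * (z₁ - z₂), 0, 0] := by
  rw [π'_eq]
  ext i j
  fin_cases i <;> fin_cases j <;>
    simp [Dir, Matrix.mul_apply, Fin.sum_univ_three, Matrix.vecHead, Matrix.vecTail] <;> ring

lemma norm_P : ‖(Matrix.diagonal ![1,0,1] : Matrix (Fin 3) (Fin 3) ℂ)‖ = 1 := by
  set P : Matrix (Fin 3) (Fin 3) ℂ := Matrix.diagonal ![1,0,1] with hP
  have hHP : Pᴴ = P := by
    ext i j; fin_cases i <;> fin_cases j <;> simp [hP, Matrix.diagonal]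
  have hPP : P * P = P := by
    ext i j; fin_cases i <;> fin_cases j <;>
      simp [hP, Matrix.mul_apply, Fin.sum_univ_three, Matrix.diagonal,
        Matrix.vecHead, Matrix.vecTail]
  have h := CStarRing.norm_star_mul_self (x := P)
  rw [Matrix.star_eq_conjTranspose, hHP, hPP] at h
  have hne : ‖P‖ ≠ 0 := by
    simp only [norm_ne_zero_iff]
    intro h0
    have : P 0 0 = 0 := by rw [h0]; rfl
    simp [hP, Matrix.diagonal] at this
  have := mul_left_cancel₀ hne (show ‖P‖ * ‖P‖ = ‖P‖ * 1 by rw [mul_one, ← h])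
  linarith

lemma habs (w : ℂ) : (starRingEnd ℂ) w * w = ((‖w‖ : ℝ) : ℂ)^2 := by
  rw [mul_comm, Complex.mul_conj, Complex.normSq_eq_norm_sq]
  push_cast
  ring

lemma norm_comm (m z₁ z₂ : ℂ) :
    ‖Dir m * π' z₁ z₂ - π' z₁ z₂ * Dir m‖ = ‖m‖ * ‖z₁ - z₂‖ := by
  rw [comm_eq]
  set C : Matrix (Fin 3) (Fin 3) ℂ :=
    !![0, 0, starRingEnd ℂ m * (z₂ - z₁); 0, 0, 0; m * (z₁ - z₂), 0, 0] with hC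
  have key : Cᴴ * C = ((‖m‖ * ‖z₁ - z₂‖ : ℝ)^2 : ℂ) • Matrix.diagonal ![1,0,1] := by
    have h1 := habs m
    have h2 := habs (z₁ - z₂)
    rw [map_sub] at h2
    ext i j
    fin_cases i <;> fin_cases j <;>
      simp [hC, Matrix.mul_apply, Fin.sum_univ_three, Matrix.diagonal,
        Matrix.conjTranspose_apply, Matrix.vecHead, Matrix.vecTail] <;>
      linear_combination ((starRingEnd ℂ z₁ - starRingEnd ℂ z₂) * (z₁ - z₂)) * h1 +
        ((‖m‖ : ℝ) : ℂ)^2 * h2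
  have h := CStarRing.norm_star_mul_self (x := C)
  rw [Matrix.star_eq_conjTranspose, key, norm_smul, norm_P, mul_one] at h
  have hb : (0:ℝ) ≤ ‖m‖ * ‖z₁ - z₂‖ := by positivity
  have h2 : ‖C‖ * ‖C‖ = (‖m‖ * ‖z₁ - z₂‖)^2 := by
    rw [← h, norm_pow, Complex.norm_real, Real.norm_eq_abs, abs_of_nonneg hb]
  calc ‖C‖ = Real.sqrt (‖C‖ * ‖C‖) := (Real.sqrt_mul_self (norm_nonneg C)).symm
    _ = Real.sqrt ((‖m‖ * ‖z₁ - z₂‖)^2) := by rw [h2]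
    _ = ‖m‖ * ‖z₁ - z₂‖ := Real.sqrt_sq hb

/-- **Connes distance of the two-point spectral geometry**: for `m ≠ 0`,
`sup { |z₁ − z₂| : ‖[D, π(z₁,z₂)]‖ ≤ 1 } = 1/|m|`. -/
theorem connes_distance_two_point (m : ℂ) (hm : m ≠ 0) :
    sSup {d : ℝ | ∃ z₁ z₂ : ℂ,
        ‖Dir m * π' z₁ z₂ - π' z₁ z₂ * Dir m‖ ≤ 1 ∧ d = ‖z₁ - z₂‖}
      = 1 / ‖m‖ := by
  have hm' : (0:ℝ) < ‖m‖ := norm_pos_iff.mpr hm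
  apply IsGreatest.csSup_eq
  constructor
  · have hz : ‖(((1/‖m‖ : ℝ)) : ℂ) - 0‖ = 1 / ‖m‖ := by
      rw [sub_zero, Complex.norm_real, Real.norm_eq_abs, abs_of_nonneg (by positivity)]
    exact ⟨((1/‖m‖ : ℝ) : ℂ), 0, by rw [norm_comm, hz, mul_one_div, div_self hm'.ne'], hz.symm⟩
  · rintro d ⟨z₁, z₂, h1, rfl⟩
    rw [norm_comm] at h1
    exact (le_div_iff₀' hm').mpr h1
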